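/- Let ε⁰, ε¹ be independent N(0, I_ℓ) Gaussian vectors and let B : Fin ℓ → Fin 2 be a random selector independent of (ε⁰, ε¹) with arbitrary distribution. Then Mix(B, [ε⁰, ε¹]) is distributed as N(0, I_ℓ) and is independent of B. -/
import Mathlib


open MeasureTheory ProbabilityTheory

lemma mix_measurable {ℓ : ℕ} (j : Fin ℓ) :
    Measurable (fun p : (Fin ℓ → Fin 2) × (Fin 2 → Fin ℓ → ℝ) => p.2 (p.1 j) j) := by
  have : (fun p : (Fin ℓ → Fin 2) × (Fin 2 → Fin ℓ → ℝ) => p.2 (p.1 j) j)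
      = fun p => if p.1 j = 0 then p.2 0 j else p.2 1 j := by
    funext p
    by_cases h : p.1 j = 0
    · simp [h]
    · have h1 : p.1 j = 1 := by omega
      simp [h, h1]
  rw [this]
  refine Measurable.ite ?_ ?_ ?_
  · exact (measurable_pi_apply j).comp measurable_fst (measurableSet_singleton 0)
  · exact (measurable_pi_apply j).comp
      (((measurable_pi_apply (0 : Fin 2)).comp measurable_snd :
        Measurable fun p : (Fin ℓ → Fin 2) × (Fin 2 → Fin ℓ → ℝ) => p.2 0))
  · exact (measurable_pi_apply j).comp
      (((measurable_pi_apply (1 : Fin 2)).comp measurable_snd :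
        Measurable fun p : (Fin ℓ → Fin 2) × (Fin 2 → Fin ℓ → ℝ) => p.2 1))

lemma mix_map_fixed {ℓ : ℕ} (b : Fin ℓ → Fin 2) :
    Measure.map (fun e : Fin 2 → Fin ℓ → ℝ => fun j => e (b j) j)
      (Measure.pi fun _ : Fin 2 => Measure.pi fun _ : Fin ℓ => gaussianReal 0 1)
    = Measure.pi fun _ : Fin ℓ => gaussianReal 0 1 := by
  have hφ : Measurable (fun e : Fin 2 → Fin ℓ → ℝ => fun j => e (b j) j) :=
    measurable_pi_lambda _ fun j =>
      (measurable_pi_apply j).comp (measurable_pi_apply (b j))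
  refine (Measure.pi_eq fun s hs => ?_).symm
  rw [Measure.map_apply hφ (MeasurableSet.univ_pi hs)]
  have hpre : (fun e : Fin 2 → Fin ℓ → ℝ => fun j => e (b j) j) ⁻¹' Set.pi Set.univ s
      = Set.pi Set.univ (fun i => Set.pi Set.univ (fun j => if b j = i then s j else Set.univ)) := by
    ext e
    simp only [Set.mem_preimage, Set.mem_pi, Set.mem_univ, forall_true_left]
    constructor
    · intro h i j
      by_cases hij : b j = i
      · subst hij; simpa using h j
      · simp [hij]
    · intro h j
      have := h (b j) j
      simpa using this
  rw [hpre, Measure.pi_pi]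
  have : ∀ i, (Measure.pi fun _ : Fin ℓ => gaussianReal 0 1)
      (Set.pi Set.univ (fun j => if b j = i then s j else Set.univ))
      = ∏ j, (gaussianReal 0 1) (if b j = i then s j else Set.univ) := fun i =>
    Measure.pi_pi _ _
  simp_rw [this]
  rw [Finset.prod_comm]
  refine Finset.prod_congr rfl fun j _ => ?_
  have : ∀ i : Fin 2, (gaussianReal 0 1) (if b j = i then s j else Set.univ)
      = if b j = i then (gaussianReal 0 1) (s j) else 1 := by
    intro i; split <;> simp
  simp_rw [this]
  simp [Finset.prod_ite_eq]

/-- mixing two independent standard Gaussian vectors according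
to a random selector `B` independent of the noise yields a standard Gaussian
vector that is moreover independent of `B`. -/
theorem stmt17 {ℓ : ℕ} {Ω : Type*} [MeasurableSpace Ω] (P : Measure Ω)
    [IsProbabilityMeasure P]
    (ε : Fin 2 → Ω → Fin ℓ → ℝ) (B : Ω → Fin ℓ → Fin 2)
    (hεmeas : ∀ i, Measurable (ε i)) (hBmeas : Measurable B)
    (hlaw : Measure.map (fun ω => fun i => ε i ω) P
      = Measure.pi fun _ : Fin 2 => Measure.pi fun _ : Fin ℓ => gaussianReal 0 1)
    (hindep : IndepFun B (fun ω => fun i => ε i ω) P) :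
    Measure.map (fun ω => fun j => ε (B ω j) ω j) P
      = Measure.pi (fun _ : Fin ℓ => gaussianReal 0 1) ∧
    IndepFun B (fun ω => fun j => ε (B ω j) ω j) P := by
  set γℓ : Measure (Fin ℓ → ℝ) := Measure.pi fun _ : Fin ℓ => gaussianReal 0 1 with hγℓ
  set ν : Measure (Fin 2 → Fin ℓ → ℝ) :=
    Measure.pi fun _ : Fin 2 => Measure.pi fun _ : Fin ℓ => gaussianReal 0 1 with hν
  set E : Ω → Fin 2 → Fin ℓ → ℝ := fun ω => fun i => ε i ω with hE
  have hEmeas : Measurable E := measurable_pi_lambda _ hεmeas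
  set g : (Fin ℓ → Fin 2) → (Fin 2 → Fin ℓ → ℝ) → (Fin ℓ → ℝ) :=
    fun b e => fun j => e (b j) j with hg
  have hgmeas : Measurable (fun p : (Fin ℓ → Fin 2) × (Fin 2 → Fin ℓ → ℝ) => g p.1 p.2) :=
    measurable_pi_lambda _ fun j => mix_measurable j
  set Mix : Ω → Fin ℓ → ℝ := fun ω => fun j => ε (B ω j) ω j with hMix
  have hMixeq : Mix = (fun p : (Fin ℓ → Fin 2) × (Fin 2 → Fin ℓ → ℝ) => g p.1 p.2)
      ∘ (fun ω => (B ω, E ω)) := rfl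
  have hpairmeas : Measurable (fun ω => (B ω, E ω)) := hBmeas.prodMk hEmeas
  have hMixmeas : Measurable Mix := hMixeq ▸ hgmeas.comp hpairmeas
  -- joint law of (B, E)
  have hjointBE : Measure.map (fun ω => (B ω, E ω)) P = (Measure.map B P).prod ν := by
    rw [(indepFun_iff_map_prod_eq_prod_map_map hBmeas.aemeasurable
      hEmeas.aemeasurable).mp hindep, hlaw]
  -- joint law of (B, Mix)
  have hG : Measurable (fun p : (Fin ℓ → Fin 2) × (Fin 2 → Fin ℓ → ℝ) => (p.1, g p.1 p.2)) :=
    measurable_fst.prodMk hgmeas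
  have key : Measure.map (fun p : (Fin ℓ → Fin 2) × (Fin 2 → Fin ℓ → ℝ) => (p.1, g p.1 p.2))
      ((Measure.map B P).prod ν) = (Measure.map B P).prod γℓ := by
    ext t ht
    rw [Measure.map_apply hG ht, Measure.prod_apply (hG ht), Measure.prod_apply ht]
    refine lintegral_congr fun b => ?_
    have hpre : Prod.mk b ⁻¹' ((fun p : (Fin ℓ → Fin 2) × (Fin 2 → Fin ℓ → ℝ) =>
        (p.1, g p.1 p.2)) ⁻¹' t) = g b ⁻¹' (Prod.mk b ⁻¹' t) := rfl
    have hgb : Measurable (g b) := measurable_pi_lambda _ fun j =>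
      (measurable_pi_apply j).comp (measurable_pi_apply (b j))
    have hsb : MeasurableSet (Prod.mk b ⁻¹' t) := measurable_prodMk_left ht
    rw [hpre, ← Measure.map_apply hgb hsb,
      show Measure.map (g b) ν = γℓ from mix_map_fixed b]
  have hjointBMix : Measure.map (fun ω => (B ω, Mix ω)) P = (Measure.map B P).prod γℓ := by
    have : (fun ω => (B ω, Mix ω)) = (fun p : (Fin ℓ → Fin 2) × (Fin 2 → Fin ℓ → ℝ) =>
        (p.1, g p.1 p.2)) ∘ (fun ω => (B ω, E ω)) := rfl
    rw [this, ← Measure.map_map hG hpairmeas, hjointBE, key]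
  -- marginal of Mix
  have hB_prob : IsProbabilityMeasure (Measure.map B P) :=
    Measure.isProbabilityMeasure_map hBmeas.aemeasurable
  have hMixlaw : Measure.map Mix P = γℓ := by
    have : Measure.map Prod.snd (Measure.map (fun ω => (B ω, Mix ω)) P)
        = Measure.map Mix P :=
      Measure.map_map measurable_snd (hBmeas.prodMk hMixmeas)
    rw [← this, hjointBMix, Measure.map_snd_prod, measure_univ, one_smul]
  refine ⟨hMixlaw, ?_⟩
  rw [indepFun_iff_map_prod_eq_prod_map_map hBmeas.aemeasurable hMixmeas.aemeasurable,
    hjointBMix, hMixlaw]
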